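/- arXiv:2403.16260 — 3 statements merged into one kernel-verified Lean document; each statement's English description precedes it below -/
import Mathlib

section
/- For a rectified epsilon-skew normal random variable Z = max(0, X), where X has density p(x) = φ((x−μ)/((1+ε)σ))/σ for x < μ and p(x) = φ((x−μ)/((1−ε)σ))/σ for x ≥ μ, with μ > 0, σ > 0, and ε ∈ (−1, 0), the expectation satisfies E[Z] = μ[1 − (1+ε)Φ(−μ/((1+ε)σ))] + (1+ε)²σ·φ(−μ/((1+ε)σ)) − 4εσ/√(2π). -/
open Real MeasureTheory Set Filter Topology

noncomputable def stdPdf (t : ℝ) : ℝ := Real.exp (-t^2/2) / Real.sqrt (2*Real.pi)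

noncomputable def stdCdf (x : ℝ) : ℝ := ∫ t in Set.Iic x, stdPdf t

lemma stdPdf_eq (t : ℝ) : stdPdf t = Real.exp (-(1/2) * t^2) * (Real.sqrt (2*Real.pi))⁻¹ := by
  unfold stdPdf; rw [div_eq_mul_inv]; ring_nf

lemma stdPdf_cont : Continuous stdPdf := by
  unfold stdPdf; fun_prop

lemma stdPdf_integrable : Integrable stdPdf := by
  have h := (integrable_exp_neg_mul_sq (by norm_num : (0:ℝ) < 1/2)).mul_const
    (Real.sqrt (2*Real.pi))⁻¹
  exact h.congr (Eventually.of_forall fun t => (stdPdf_eq t).symm)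

lemma sqrt_two_pi_pos : 0 < Real.sqrt (2*Real.pi) :=
  Real.sqrt_pos.2 (by positivity)

lemma integral_stdPdf : ∫ t, stdPdf t = 1 := by
  simp_rw [stdPdf_eq]
  rw [integral_mul_const, integral_gaussian]
  rw [show Real.pi / (1/2) = 2 * Real.pi by ring]
  exact mul_inv_cancel₀ sqrt_two_pi_pos.ne'

lemma stdPdf_even (t : ℝ) : stdPdf (-t) = stdPdf t := by
  unfold stdPdf; rw [neg_pow]; norm_num

lemma stdPdf_zero : stdPdf 0 = (Real.sqrt (2*Real.pi))⁻¹ := by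
  unfold stdPdf; norm_num [Real.exp_zero, div_eq_mul_inv]

lemma stdCdf_zero : stdCdf 0 = 1/2 := by
  have hsym : stdCdf 0 = ∫ t in Ioi (0:ℝ), stdPdf t := by
    unfold stdCdf
    rw [show (∫ t in Iic (0:ℝ), stdPdf t) = ∫ t in Iic (0:ℝ), stdPdf (-t) by
      exact setIntegral_congr_fun measurableSet_Iic fun t _ => (stdPdf_even t).symm]
    rw [integral_comp_neg_Iic, neg_zero]
  have hsum : stdCdf 0 + ∫ t in Ioi (0:ℝ), stdPdf t = 1 := by
    unfold stdCdf
    rw [intervalIntegral.integral_Iic_add_Ioi stdPdf_integrable.integrableOn stdPdf_integrable.integrableOn]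
    exact integral_stdPdf
  linarith [hsym, hsum]

lemma stdCdf_sub (x y : ℝ) : stdCdf y - stdCdf x = ∫ t in x..y, stdPdf t :=
  intervalIntegral.integral_Iic_sub_Iic stdPdf_integrable.integrableOn
    stdPdf_integrable.integrableOn

lemma stdCdf_hasDeriv (x : ℝ) : HasDerivAt stdCdf (stdPdf x) x := by
  have h : HasDerivAt (fun y => stdCdf 0 + ∫ t in (0:ℝ)..y, stdPdf t) (stdPdf x) x := by
    refine HasDerivAt.const_add _ ?_
    exact intervalIntegral.integral_hasDerivAt_right
      stdPdf_integrable.intervalIntegrable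
      (stdPdf_cont.stronglyMeasurableAtFilter _ _)
      stdPdf_cont.continuousAt
  refine h.congr_of_eventuallyEq (Eventually.of_forall fun y => ?_)
  show stdCdf y = stdCdf 0 + ∫ t in (0:ℝ)..y, stdPdf t
  have := stdCdf_sub 0 y
  linarith

lemma stdPdf_hasDeriv (x : ℝ) : HasDerivAt stdPdf (-x * stdPdf x) x := by
  have h1 : HasDerivAt (fun t : ℝ => -t^2/2) (-x) x := by
    have := ((hasDerivAt_pow 2 x).neg).div_const 2
    refine this.congr_deriv ?_; push_cast; ring
  have := (h1.exp).div_const (Real.sqrt (2*Real.pi))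
  refine HasDerivAt.congr_of_eventuallyEq ?_ (Eventually.of_forall fun y => rfl)
  refine this.congr_deriv ?_
  unfold stdPdf; ring

lemma stdCdf_tendsto_one : Tendsto stdCdf atTop (𝓝 1) := by
  have h1 : Tendsto (fun y => ∫ t in (0:ℝ)..y, stdPdf t) atTop
      (𝓝 (∫ t in Ioi (0:ℝ), stdPdf t)) :=
    intervalIntegral_tendsto_integral_Ioi 0 stdPdf_integrable.integrableOn tendsto_id
  have h2 : Tendsto (fun y => stdCdf 0 + ∫ t in (0:ℝ)..y, stdPdf t) atTop
      (𝓝 (stdCdf 0 + ∫ t in Ioi (0:ℝ), stdPdf t)) := tendsto_const_nhds.add h1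
  have h3 : stdCdf 0 + ∫ t in Ioi (0:ℝ), stdPdf t = 1 := by
    unfold stdCdf
    rw [intervalIntegral.integral_Iic_add_Ioi stdPdf_integrable.integrableOn stdPdf_integrable.integrableOn]
    exact integral_stdPdf
  rw [← h3]
  refine h2.congr fun y => ?_
  show stdCdf 0 + ∫ t in (0:ℝ)..y, stdPdf t = stdCdf y
  have := stdCdf_sub 0 y; linarith

lemma stdPdf_tendsto_zero : Tendsto stdPdf atTop (𝓝 0) := by
  have h : Tendsto (fun t : ℝ => -t^2/2) atTop atBot := by
    simp only [neg_div]
    exact Filter.tendsto_neg_atBot_iff.mpr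
      ((tendsto_pow_atTop two_ne_zero).atTop_div_const two_pos)
  have := (Real.tendsto_exp_atBot.comp h).div_const (Real.sqrt (2*Real.pi))
  simp only [Function.comp_def, zero_div] at this; exact this

lemma stdCdf_cont : Continuous stdCdf :=
  continuous_iff_continuousAt.mpr fun x => (stdCdf_hasDeriv x).continuousAt

lemma hasDerivAt_F (m a : ℝ) (ha : a ≠ 0) (x : ℝ) :
    HasDerivAt (fun y => m * a * stdCdf ((y - m)/a) - a^2 * stdPdf ((y - m)/a))
      (x * stdPdf ((x - m)/a)) x := by
  have hlin : HasDerivAt (fun y : ℝ => (y - m)/a) (1/a) x :=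
    ((hasDerivAt_id x).sub_const m).div_const a
  have h1 := (stdCdf_hasDeriv ((x-m)/a)).comp x hlin
  have h2 := (stdPdf_hasDeriv ((x-m)/a)).comp x hlin
  have h := (h1.const_mul (m*a)).sub (h2.const_mul (a^2))
  refine h.congr_deriv ?_
  field_simp
  ring

noncomputable def esnPdf (μ σ ε x : ℝ) : ℝ :=
  if x < μ then stdPdf ((x - μ)/((1+ε)*σ)) / σ else stdPdf ((x - μ)/((1-ε)*σ)) / σ

theorem rectified_esn_expectation (μ σ ε : ℝ) (hμ : 0 < μ) (hσ : 0 < σ)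
    (hε : ε ∈ Set.Ioo (-1 : ℝ) 0) :
    (∫ x, max 0 x * esnPdf μ σ ε x) =
      μ * (1 - (1+ε) * stdCdf (-μ/((1+ε)*σ)))
        + (1+ε)^2 * σ * stdPdf (-μ/((1+ε)*σ)) - 4*ε*σ/Real.sqrt (2*Real.pi) := by
  obtain ⟨hε1, hε2⟩ := hε
  set a := (1+ε)*σ with hadef
  set b := (1-ε)*σ with hbdef
  have ha : 0 < a := mul_pos (by linarith) hσ
  have hb : 0 < b := mul_pos (by linarith) hσ
  -- pointwise descriptions of esnPdf
  have hleft : ∀ x : ℝ, x ≤ μ → esnPdf μ σ ε x = stdPdf ((x - μ)/a) / σ := by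
    intro x hx
    rcases lt_or_eq_of_le hx with h | h
    · simp [esnPdf, h, a]
    · subst h; simp [esnPdf, sub_self]
  have hright : ∀ x : ℝ, μ ≤ x → esnPdf μ σ ε x = stdPdf ((x - μ)/b) / σ := by
    intro x hx
    simp [esnPdf, not_lt.mpr hx, b]
  -- integrability of the right tail function on ℝ
  have hg : Integrable (fun t : ℝ => t * stdPdf t) := by
    have h := (integrable_mul_exp_neg_mul_sq (by norm_num : (0:ℝ) < 1/2)).mul_const
      (Real.sqrt (2*Real.pi))⁻¹
    refine h.congr (Eventually.of_forall fun t => ?_)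
    simp only [stdPdf_eq]; ring
  have hgb : Integrable (fun x : ℝ => x * stdPdf ((x - μ)/b)) := by
    have h1 : Integrable (fun x : ℝ => b * ((x - μ)/b * stdPdf ((x - μ)/b))
        + μ * stdPdf ((x - μ)/b)) := by
      have hc1 : Integrable (fun x : ℝ => (x - μ)/b * stdPdf ((x - μ)/b)) :=
        (hg.comp_div hb.ne').comp_sub_right μ
      have hc2 : Integrable (fun x : ℝ => stdPdf ((x - μ)/b)) :=
        (stdPdf_integrable.comp_div hb.ne').comp_sub_right μ
      exact (hc1.const_mul b).add (hc2.const_mul μ)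
    refine h1.congr (Eventually.of_forall fun x => ?_)
    field_simp
    ring
  -- reduce to Ioi 0
  have h0 : (∫ x, max 0 x * esnPdf μ σ ε x) = ∫ x in Ioi (0:ℝ), x * esnPdf μ σ ε x := by
    rw [← setIntegral_eq_integral_of_forall_compl_eq_zero
      (s := Ioi (0:ℝ)) (f := fun x => max 0 x * esnPdf μ σ ε x)
      (fun x hx => by
        have hx0 : x ≤ 0 := not_lt.mp (by simpa using hx)
        have : max 0 x = 0 := max_eq_left hx0
        simp [this])]
    refine setIntegral_congr_fun measurableSet_Ioi fun x hx => ?_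
    have : max 0 x = x := max_eq_right (le_of_lt hx)
    simp [this]
  -- integrability on pieces
  have hint2 : IntegrableOn (fun x => x * esnPdf μ σ ε x) (Ioi μ) := by
    refine ((hgb.div_const σ).integrableOn (s := Ioi μ)).congr_fun
      (fun x hx => ?_) measurableSet_Ioi
    rw [hright x (le_of_lt hx)]; ring
  have hint1 : IntegrableOn (fun x => x * esnPdf μ σ ε x) (Ioc 0 μ) := by
    have hc : Continuous (fun x : ℝ => x * (stdPdf ((x - μ)/a) / σ)) :=
      continuous_id.mul ((stdPdf_cont.comp (by fun_prop)).div_const σ)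
    refine ((hc.integrableOn_Icc (a := 0) (b := μ)).mono_set
      Ioc_subset_Icc_self).congr_fun (fun x hx => ?_) measurableSet_Ioc
    rw [hleft x hx.2]
  -- split
  have hsplit : (∫ x in Ioi (0:ℝ), x * esnPdf μ σ ε x)
      = (∫ x in Ioc (0:ℝ) μ, x * esnPdf μ σ ε x) + ∫ x in Ioi μ, x * esnPdf μ σ ε x := by
    rw [← setIntegral_union (Ioc_disjoint_Ioi le_rfl) measurableSet_Ioi hint1 hint2,
      Ioc_union_Ioi_eq_Ioi hμ.le]
  -- piece A
  have hA : (∫ x in Ioc (0:ℝ) μ, x * esnPdf μ σ ε x)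
      = ((μ * a * stdCdf 0 - a^2 * stdPdf 0)
        - (μ * a * stdCdf (-μ/a) - a^2 * stdPdf (-μ/a))) / σ := by
    rw [setIntegral_congr_fun measurableSet_Ioc
      (g := fun x => (x * stdPdf ((x - μ)/a)) / σ)
      (fun x hx => by rw [hleft x hx.2]; ring)]
    rw [← intervalIntegral.integral_of_le hμ.le, intervalIntegral.integral_div]
    congr 1
    have := intervalIntegral.integral_eq_sub_of_hasDerivAt
      (f := fun y => μ * a * stdCdf ((y - μ)/a) - a^2 * stdPdf ((y - μ)/a))
      (f' := fun x => x * stdPdf ((x - μ)/a))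
      (fun x _ => hasDerivAt_F μ a ha.ne' x)
      (Continuous.intervalIntegrable
        (continuous_id.mul (stdPdf_cont.comp (by fun_prop))) 0 μ)
    rw [this]
    simp [sub_self, zero_sub, neg_div]
  -- piece B
  have hB : (∫ x in Ioi μ, x * esnPdf μ σ ε x)
      = (μ * b - (μ * b * stdCdf 0 - b^2 * stdPdf 0)) / σ := by
    rw [setIntegral_congr_fun measurableSet_Ioi
      (g := fun x => (x * stdPdf ((x - μ)/b)) / σ)
      (fun x hx => by rw [hright x (le_of_lt hx)]; ring)]
    rw [integral_div]
    congr 1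
    have hlim : Tendsto (fun y => μ * b * stdCdf ((y - μ)/b) - b^2 * stdPdf ((y - μ)/b))
        atTop (𝓝 (μ * b)) := by
      have harg : Tendsto (fun y : ℝ => (y - μ)/b) atTop atTop :=
        (tendsto_atTop_add_const_right _ (-μ) tendsto_id).atTop_div_const hb
      have h1 : Tendsto (fun y => μ * b * stdCdf ((y - μ)/b)) atTop (𝓝 (μ * b * 1)) :=
        (stdCdf_tendsto_one.comp harg).const_mul _
      have h2 : Tendsto (fun y => b^2 * stdPdf ((y - μ)/b)) atTop (𝓝 (b^2 * 0)) :=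
        (stdPdf_tendsto_zero.comp harg).const_mul _
      simpa using h1.sub h2
    have := integral_Ioi_of_hasDerivAt_of_tendsto
      (f := fun y => μ * b * stdCdf ((y - μ)/b) - b^2 * stdPdf ((y - μ)/b))
      (f' := fun x => x * stdPdf ((x - μ)/b)) (a := μ)
      (Continuous.continuousWithinAt
        ((continuous_const.mul (stdCdf_cont.comp (by fun_prop))).sub
          (continuous_const.mul (stdPdf_cont.comp (by fun_prop)))))
      (fun x _ => hasDerivAt_F μ b hb.ne' x)
      hgb.integrableOn hlim
    rw [this]
    simp [sub_self]
  -- assemble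
  rw [h0, hsplit, hA, hB, stdCdf_zero, stdPdf_zero]
  rw [hadef, hbdef]
  have h2π : Real.sqrt (2*Real.pi) ≠ 0 := sqrt_two_pi_pos.ne'
  field_simp
  ring
end

section
/- Let U(x,a) = a²φ(x/a) − φ(x) and V(x, a, c) = σ·[(1/c)·U(xc, a) − U(x, a) + (4(a−1)/√(2π))·(1 − 1/c)] with σ > 0 and φ the standard normal PDF. Then for all x > 0, a ∈ (0,1), and c > 1, the partial derivative of V with respect to c is strictly negative. -/
open Real MeasureTheory

noncomputable def U (x a : ℝ) : ℝ := a^2 * stdPdf (x/a) - stdPdf x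

noncomputable def V (σ x a c : ℝ) : ℝ :=
  σ * ((1/c) * U (x*c) a - U x a + (4*(a-1)/Real.sqrt (2*Real.pi)) * (1 - 1/c))

lemma taylor3 (u : ℝ) (hu : 0 ≤ u) : 1 + u + 2*u^2 ≤ 2*Real.exp u := by
  have h := Real.sum_le_exp_of_nonneg hu 4
  norm_num [Finset.sum_range_succ, Nat.factorial] at h
  have h6 : (0:ℝ) ≤ u*((u-1)^2 - (u-1) + 1) :=
    mul_nonneg hu (by nlinarith [sq_nonneg (2*u-3)])
  nlinarith [h, h6]

lemma psi_deriv (y b : ℝ) (hb : 0 < b) :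
    HasDerivAt (fun t : ℝ => (t^2+2*y)*Real.exp (-y/t^2) - 4*t)
      ((2*b)*Real.exp (-y/b^2) + (b^2+2*y)*(Real.exp (-y/b^2)*(2*y*b/(b^2)^2)) - 4) b := by
  have hb2 : (b:ℝ)^2 ≠ 0 := pow_ne_zero 2 hb.ne'
  have h1 : HasDerivAt (fun t : ℝ => t^2) (2*b) b := by
    simpa using hasDerivAt_pow 2 b
  have h2 : HasDerivAt (fun t : ℝ => -y/t^2) (2*y*b/(b^2)^2) b := by
    have h := (h1.inv hb2).const_mul (-y)
    have hfg : (fun t : ℝ => -y/t^2) = (fun t : ℝ => -y * (t^2)⁻¹) := by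
      funext t; rw [div_eq_mul_inv]
    rw [hfg]
    refine h.congr_deriv ?_
    field_simp
  have h3 : HasDerivAt (fun t : ℝ => Real.exp (-y/t^2))
      (Real.exp (-y/b^2) * (2*y*b/(b^2)^2)) b := h2.exp
  have h4 : HasDerivAt (fun t : ℝ => (t^2+2*y)*Real.exp (-y/t^2))
      ((2*b)*Real.exp (-y/b^2) + (b^2+2*y)*(Real.exp (-y/b^2)*(2*y*b/(b^2)^2))) b :=
    (h1.add_const (2*y)).mul h3
  have h5 : HasDerivAt (fun t : ℝ => (4:ℝ)*t) 4 b := by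
    simpa using (hasDerivAt_id b).const_mul (4:ℝ)
  exact h4.sub h5

lemma psi_anti (y a : ℝ) (hy : 0 < y) (ha : 0 < a) (ha1 : a < 1) :
    (1+2*y)*Real.exp (-y) - 4 < (a^2+2*y)*Real.exp (-y/a^2) - 4*a := by
  have key : StrictAntiOn (fun t : ℝ => (t^2+2*y)*Real.exp (-y/t^2) - 4*t) (Set.Icc a 1) := by
    apply strictAntiOn_of_deriv_neg (convex_Icc a 1)
    · intro b hb
      exact ((psi_deriv y b (lt_of_lt_of_le ha hb.1)).continuousAt).continuousWithinAt
    · intro b hb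
      rw [interior_Icc] at hb
      have hb0 : 0 < b := lt_trans ha hb.1
      rw [(psi_deriv y b hb0).deriv]
      have hu : 0 ≤ y/b^2 := by positivity
      have hkey := taylor3 (y/b^2) hu
      have hE : 0 < Real.exp (y/b^2) := Real.exp_pos _
      have hexp : Real.exp (-y/b^2) = (Real.exp (y/b^2))⁻¹ := by
        rw [← Real.exp_neg]; ring_nf
      rw [hexp]
      have h2 : (2*b) * (Real.exp (y/b^2))⁻¹
            + (b^2+2*y)*((Real.exp (y/b^2))⁻¹*(2*y*b/(b^2)^2)) - 4
          = (2*b)*(1 + y/b^2 + 2*(y/b^2)^2) / Real.exp (y/b^2) - 4 := by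
        field_simp
        ring
      rw [h2, sub_neg, div_lt_iff₀ hE]
      have hp : 0 < 1 + y/b^2 + 2*(y/b^2)^2 := by positivity
      nlinarith [hkey, hp, hb.2, hb0]
  have h := key (Set.left_mem_Icc.mpr ha1.le) (Set.right_mem_Icc.mpr ha1.le) ha1
  simp only [one_pow, div_one, mul_one] at h
  linarith [h]

theorem deriv_V_c_neg (σ x a c : ℝ) (hσ : 0 < σ) (hx : 0 < x)
    (ha : a ∈ Set.Ioo (0:ℝ) 1) (hc : 1 < c) :
    deriv (fun c' => V σ x a c') c < 0 := by
  obtain ⟨ha0, ha1⟩ := ha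
  have hc0 : (0:ℝ) < c := lt_trans one_pos hc
  set s := Real.sqrt (2*Real.pi) with hs_def
  have hs : 0 < s := Real.sqrt_pos.mpr (by positivity)
  have hstd : ∀ k : ℝ, HasDerivAt (fun c' : ℝ => stdPdf (k * c'))
      ((-(k^2*c)) * stdPdf (k*c)) c := by
    intro k
    have h1 : HasDerivAt (fun c' : ℝ => k * c') k c := by
      simpa using (hasDerivAt_id c).const_mul k
    have h2 : HasDerivAt (fun c' : ℝ => -(k*c')^2/2) (-(k^2*c)) c := by
      have := ((h1.pow 2).neg).div_const 2
      refine this.congr_deriv ?_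
      ring
    have h3 := (h2.exp).div_const s
    refine h3.congr_deriv ?_
    simp only [stdPdf, ← hs_def]
    ring
  have hA := hstd x
  have hB := hstd (x/a)
  have hU : HasDerivAt (fun c' : ℝ => a^2 * stdPdf (x/a*c') - stdPdf (x*c'))
      (a^2 * ((-((x/a)^2*c)) * stdPdf (x/a*c)) - (-(x^2*c)) * stdPdf (x*c)) c :=
    (hB.const_mul _).sub hA
  have hinv : HasDerivAt (fun c' : ℝ => 1/c') (-(1/c^2)) c := by
    simpa [one_div] using hasDerivAt_inv hc0.ne'
  have hprod := hinv.mul hU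
  have hlin : HasDerivAt (fun c' : ℝ => (4*(a-1)/s) * (1 - 1/c'))
      ((4*(a-1)/s) * (1/c^2)) c := by
    have := ((hasDerivAt_const c (1:ℝ)).sub hinv).const_mul (4*(a-1)/s)
    refine this.congr_deriv ?_
    ring
  have total := ((hprod.sub_const (U x a)).add hlin).const_mul σ
  have hfun : (fun c' => V σ x a c')
      = (fun c' : ℝ => σ * (1/c' * (a^2 * stdPdf (x/a*c') - stdPdf (x*c')) - U x a
          + (4*(a-1)/s) * (1 - 1/c'))) := by
    funext t
    simp only [V, U, ← hs_def]
    rw [div_mul_eq_mul_div]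
    ring
  rw [hfun, HasDerivAt.deriv (f := fun c' : ℝ => σ * (1/c' * (a^2 * stdPdf (x/a*c') - stdPdf (x*c')) - U x a
          + (4*(a-1)/s) * (1 - 1/c'))) total]
  set y := (x*c)^2/2 with hy_def
  have hy : 0 < y := by positivity
  have hEa : stdPdf (x/a*c) = Real.exp (-y/a^2) / s := by
    simp only [stdPdf, ← hs_def]
    congr 1
    rw [hy_def]
    field_simp
  have hE1 : stdPdf (x*c) = Real.exp (-y) / s := by
    simp only [stdPdf, ← hs_def]
    congr 1
    rw [hy_def]
    ring
  rw [hEa, hE1]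
  have e1 : x^2*c = 2*y/c := by rw [hy_def]; field_simp
  have e2 : (x/a)^2*c = 2*y/(a^2*c) := by rw [hy_def]; field_simp
  rw [e1, e2]
  have hpos : 0 < σ/(c^2*s) := by positivity
  have hG := psi_anti y a hy ha0 ha1
  have hneg : (((1:ℝ)+2*y)*Real.exp (-y) - 4) - ((a^2+2*y)*Real.exp (-y/a^2) - 4*a) < 0 := by
    linarith
  refine lt_of_eq_of_lt ?_ (mul_neg_of_pos_of_neg hpos hneg)
  field_simp
  ring
end

section
/- For every integer n ≥ 3, the Wallis-type integral satisfies ∫₀^{π/2} sin^{n−2}θ dθ > (2√2)/(3√(n−2)). -/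
open Real

lemma cos_pow_lower (m : ℕ) (hm : 1 ≤ m) :
    (2 * Real.sqrt 2) / (3 * Real.sqrt (m:ℝ)) <
      ∫ θ in (0:ℝ)..(π/2), Real.cos θ ^ m := by
  set M : ℝ := (m:ℝ) with hM
  have hM1 : (1:ℝ) ≤ M := by rw [hM]; exact_mod_cast hm
  have hM0 : (0:ℝ) < M := lt_of_lt_of_le one_pos hM1
  set c : ℝ := Real.sqrt (2 / M) with hc
  have hc0 : 0 < c := Real.sqrt_pos.2 (by positivity)
  have hc2 : c ^ 2 = 2 / M := Real.sq_sqrt (by positivity)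
  have hcle2 : c ^ 2 ≤ 2 := by
    rw [hc2]; rw [div_le_iff₀ hM0]; nlinarith
  have hcpi : c < π / 2 := by
    have h2 : c ^ 2 < (π/2)^2 := by
      have : (1.5:ℝ) < π/2 := by have := Real.pi_gt_d6; linarith
      nlinarith
    have hpi2 : 0 < π / 2 := by positivity
    nlinarith [sq_nonneg (c - π/2), sq_nonneg (c + π/2)]
  -- pointwise bound on [0, c]
  have key : ∀ x ∈ Set.Icc (0:ℝ) c, 1 - M / 2 * x ^ 2 ≤ Real.cos x ^ m := by
    intro x hx
    have hx0 := hx.1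
    have hxc := hx.2
    have hx2 : x ^ 2 ≤ 2 := le_trans (by nlinarith) hcle2
    have hb : (1:ℝ) + (m:ℝ) * (-(x^2/2)) ≤ (1 + (-(x^2/2)))^m :=
      one_add_mul_le_pow (by nlinarith) m
    have h1 : (0:ℝ) ≤ 1 + (-(x^2/2)) := by nlinarith
    have hcos : 1 + (-(x^2/2)) ≤ Real.cos x := by
      have := Real.one_sub_sq_div_two_le_cos (x := x); linarith
    have h2 : (1 + (-(x^2/2)))^m ≤ Real.cos x ^ m := pow_le_pow_left₀ h1 hcos m
    calc 1 - M / 2 * x ^ 2 = 1 + (m:ℝ) * (-(x^2/2)) := by rw [hM]; ring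
      _ ≤ (1 + (-(x^2/2)))^m := hb
      _ ≤ Real.cos x ^ m := h2
  -- strict inequality on [0,c]
  have hstrict : (∫ x in (0:ℝ)..c, (1 - M / 2 * x ^ 2)) <
      ∫ x in (0:ℝ)..c, Real.cos x ^ m := by
    apply intervalIntegral.integral_lt_integral_of_continuousOn_of_le_of_exists_lt hc0
    · exact (continuous_const.sub (continuous_const.mul (continuous_pow 2))).continuousOn
    · exact (Real.continuous_cos.pow m).continuousOn
    · intro x hx; exact key x ⟨hx.1.le, hx.2⟩
    · refine ⟨c, ⟨hc0.le, le_refl c⟩, ?_⟩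
      have h1 : 1 - M / 2 * c ^ 2 = 0 := by rw [hc2]; field_simp; ring
      have h2 : 0 < Real.cos c := Real.cos_pos_of_mem_Ioo ⟨by linarith, hcpi⟩
      rw [h1]; positivity
  -- compute the polynomial integral
  have hval : (∫ x in (0:ℝ)..c, (1 - M / 2 * x ^ 2)) =
      2 * Real.sqrt 2 / (3 * Real.sqrt M) := by
    have hint : (∫ x in (0:ℝ)..c, (1 - M / 2 * x ^ 2)) = c - M / 2 * (c ^ 3 / 3) := by
      rw [intervalIntegral.integral_sub intervalIntegrable_const
          ((intervalIntegral.intervalIntegrable_pow 2).const_mul _),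
        intervalIntegral.integral_const, intervalIntegral.integral_const_mul, integral_pow]
      simp only [smul_eq_mul]
      push_cast
      ring
    have h3 : c ^ 3 = (2 / M) * c := by
      rw [pow_succ, hc2]
    have hcs : c = Real.sqrt 2 / Real.sqrt M := by
      rw [hc, Real.sqrt_div (by norm_num : (0:ℝ) ≤ 2)]
    rw [hint, h3, hcs]
    field_simp
    ring
  rw [hval] at hstrict
  -- extend to [0, π/2]
  have hsplit : (∫ x in (0:ℝ)..c, Real.cos x ^ m) + (∫ x in c..(π/2), Real.cos x ^ m)
      = ∫ x in (0:ℝ)..(π/2), Real.cos x ^ m := by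
    apply intervalIntegral.integral_add_adjacent_intervals <;>
      exact (Real.continuous_cos.pow m).intervalIntegrable _ _
  have hnn : 0 ≤ ∫ x in c..(π/2), Real.cos x ^ m := by
    apply intervalIntegral.integral_nonneg hcpi.le
    intro x hx
    exact pow_nonneg (Real.cos_nonneg_of_mem_Icc ⟨by linarith [hx.1, hc0.le], hx.2⟩) m
  linarith

theorem wallis_lower_bound (n : ℕ) (hn : 3 ≤ n) :
    (2 * Real.sqrt 2) / (3 * Real.sqrt ((n:ℝ) - 2)) <
      ∫ θ in (0:ℝ)..(π/2), Real.sin θ ^ (n-2) := by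
  set m := n - 2 with hm
  have hm1 : 1 ≤ m := by omega
  have hcast : ((n:ℝ) - 2) = (m:ℝ) := by
    have : (n:ℕ) = m + 2 := by omega
    rw [this]; push_cast; ring
  rw [hcast]
  have hsub : (∫ θ in (0:ℝ)..(π/2), Real.sin θ ^ m)
      = ∫ θ in (0:ℝ)..(π/2), Real.cos θ ^ m := by
    have := intervalIntegral.integral_comp_sub_left
      (fun x => Real.sin x ^ m) (π/2) (a := 0) (b := π/2)
    simp only [Real.sin_pi_div_two_sub, sub_self, sub_zero] at this
    rw [← this]
  rw [hsub]
  exact cos_pow_lower m hm1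
end
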